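/- Let k ≥ 3 and let M(n) denote the number of optimal (minimal-weight) k-bit BSD representations of n ∈ I_k. For 0 ≤ v < |I_{k-2}|: M(a_k + v) = M(2^{k-2} - (a_{k-2} + v)) + M(a_{k-2} + v) and M(c_k + v) = M(a_{k-2} + v), where a_k = min I_k and c_k = 2^{k-1} + a_{k-2}. -/

import Mathlib

open Polynomial in
/-- The Stern polynomial: `B 0 = 0`, `B 1 = 1`, `B (2n) = t * B n`, `B (2n+1) = B n + B (n+1)`. -/
noncomputable def sternP : ℕ → Polynomial ℕ
  | 0 => 0
  | 1 => 1
  | n + 2 =>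
    if (n + 2) % 2 = 0 then X * sternP (n / 2 + 1)
    else sternP (n / 2 + 1) + sternP (n / 2 + 2)
decreasing_by all_goals omega

/-- The digits of a BSD representation lie in {-1, 0, 1}. -/
def IsBSDDigits {i : ℕ} (b : Fin i → ℤ) : Prop := ∀ j, b j ∈ ({-1, 0, 1} : Set ℤ)

/-- The value represented by the digit string `b` (least significant digit `b 0`). -/
def bsdVal {i : ℕ} (b : Fin i → ℤ) : ℤ := ∑ j : Fin i, b j * 2 ^ (j : ℕ)

/-- `b` is a (not necessarily reduced) non-adjacent form digit string of length `k`: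
digits in {-1,0,1}, no two adjacent digits both nonzero, and nonzero leading digit
(when `k > 0`). -/
def IsReducedNAF {k : ℕ} (b : Fin k → ℤ) : Prop :=
  IsBSDDigits b ∧
  (∀ j : Fin k, ∀ h : (j : ℕ) + 1 < k, b j = 0 ∨ b ⟨(j : ℕ) + 1, h⟩ = 0) ∧
  (∀ h : 0 < k, b ⟨k - 1, Nat.sub_lt h one_pos⟩ ≠ 0)

/-- `m` has a reduced NAF representation of bitlength `k`. -/
def HasNAFLen (m : ℤ) (k : ℕ) : Prop :=
  ∃ b : Fin k → ℤ, IsReducedNAF b ∧ bsdVal b = m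

/-- `I k`: the set of positive integers of NAF-bitlength `k`. -/
def NAFInterval (k : ℕ) : Set ℕ := {n : ℕ | HasNAFLen (n : ℤ) k}

/-- `a k = min I k`: `a 1 = 1`, `a 2 = 2`, `a k = 2^(k-2) + a (k-2)`. -/
def aseq : ℕ → ℕ
  | 0 => 0
  | 1 => 1
  | 2 => 2
  | k + 3 => 2 ^ (k + 1) + aseq (k + 1)

/-- The NAF-bitlength of `n`. -/
noncomputable def nafLen (n : ℕ) : ℕ := sInf {k : ℕ | HasNAFLen (n : ℤ) k}

/-- The minimal Hamming weight of a BSD representation of `n` of length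
equal to its NAF-bitlength. -/
noncomputable def minWeight (n : ℕ) : ℕ :=
  sInf {w : ℕ | ∃ b : Fin (nafLen n) → ℤ,
    IsBSDDigits b ∧ bsdVal b = (n : ℤ) ∧ {j | b j ≠ 0}.ncard = w}

/-- `Z n`: the number of zeros in an optimal (minimal-weight) BSD representation of `n`
of length equal to its NAF-bitlength. -/
noncomputable def Zfun (n : ℕ) : ℕ := nafLen n - minWeight n

/-- `M n`: the number of optimal (minimal-weight) BSD representations of `n`
of length equal to its NAF-bitlength. -/
noncomputable def Mfun (n : ℕ) : ℕ :=
  {b : Fin (nafLen n) → ℤ |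
    IsBSDDigits b ∧ bsdVal b = (n : ℤ) ∧ {j | b j ≠ 0}.ncard = minWeight n}.ncard



def cnt : ℕ → ℤ → ℕ → ℕ
  | 0, m, w => if m = 0 ∧ w = 0 then 1 else 0
  | (L+1), m, w =>
    if m % 2 = 0 then cnt L (m/2) w
    else match w with
      | 0 => 0
      | (w+1) => cnt L ((m-1)/2) w + cnt L ((m+1)/2) w

/-- NAF weight -/
def wnaf : ℕ → ℕ
  | 0 => 0
  | 1 => 1
  | (n+2) =>
    if (n+2) % 2 = 0 then wnaf ((n+2)/2)
    else if (n+2) % 4 = 1 then 1 + wnaf ((n+2)/2)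
    else 1 + wnaf ((n+2)/2 + 1)
decreasing_by all_goals omega

/-- NAF length -/
def nlen : ℕ → ℕ
  | 0 => 0
  | 1 => 1
  | (n+2) =>
    (if (n+2) % 2 = 0 then nlen ((n+2)/2)
    else if (n+2) % 4 = 1 then nlen ((n+2)/2)
    else nlen ((n+2)/2 + 1)) + 1
decreasing_by all_goals omega

lemma wnaf_even (m : ℕ) (h : m % 2 = 0) (h1 : 1 ≤ m) : wnaf m = wnaf (m/2) := by
  obtain ⟨n, rfl⟩ : ∃ n, m = n + 2 := ⟨m - 2, by omega⟩
  rw [wnaf]; simp [h]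

lemma wnaf_odd1 (m : ℕ) (h : m % 4 = 1) : wnaf m = 1 + wnaf (m/2) := by
  match m, h with
  | 1, _ => simp [wnaf]
  | (n+2), h => rw [wnaf]; have : (n+2) % 2 = 1 := by omega
                simp [this, h]

lemma wnaf_odd3 (m : ℕ) (h : m % 4 = 3) : wnaf m = 1 + wnaf (m/2 + 1) := by
  obtain ⟨n, rfl⟩ : ∃ n, m = n + 2 := ⟨m - 2, by omega⟩
  rw [wnaf]
  have h2 : (n+2) % 2 = 1 := by omega
  have h4 : ¬ ((n+2) % 4 = 1) := by omega
  simp [h2, h4, h]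

lemma nlen_even (m : ℕ) (h : m % 2 = 0) (h1 : 1 ≤ m) : nlen m = nlen (m/2) + 1 := by
  obtain ⟨n, rfl⟩ : ∃ n, m = n + 2 := ⟨m - 2, by omega⟩
  rw [nlen]; simp [h]

lemma nlen_odd1 (m : ℕ) (h : m % 4 = 1) : nlen m = nlen (m/2) + 1 := by
  match m, h with
  | 1, _ => simp [nlen]
  | (n+2), h => rw [nlen]; have : (n+2) % 2 = 1 := by omega
                simp [this, h]

lemma nlen_odd3 (m : ℕ) (h : m % 4 = 3) : nlen m = nlen (m/2 + 1) + 1 := by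
  obtain ⟨n, rfl⟩ : ∃ n, m = n + 2 := ⟨m - 2, by omega⟩
  rw [nlen]
  have h2 : (n+2) % 2 = 1 := by omega
  have h4 : ¬ ((n+2) % 4 = 1) := by omega
  simp [h2, h4, h]

lemma nlen_eq_zero (m : ℕ) : nlen m = 0 ↔ m = 0 := by
  constructor
  · intro h
    by_contra hm
    rcases (by omega : m = 1 ∨ 2 ≤ m) with h1 | h1
    · rw [h1] at h; simp [nlen] at h
    · rcases Nat.even_or_odd m with he | ho
      · rw [nlen_even m (Nat.even_iff.1 he) (by omega)] at h; omega
      · have := Nat.odd_iff.1 ho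
        rcases (by omega : m % 4 = 1 ∨ m % 4 = 3) with h4 | h4
        · rw [nlen_odd1 m h4] at h; omega
        · rw [nlen_odd3 m h4] at h; omega
  · rintro rfl; simp [nlen]

lemma wnaf_pairs : ∀ m : ℕ,
    (wnaf (2*m) ≤ wnaf (2*m+1) ∧ wnaf (2*m+1) ≤ wnaf (2*m) + 1) ∧
    (wnaf (2*m+2) ≤ wnaf (2*m+1) ∧ wnaf (2*m+1) ≤ wnaf (2*m+2) + 1) ∧
    (wnaf (2*m+1) = wnaf (2*m) → nlen (2*m+1) ≤ nlen (2*m)) ∧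
    (wnaf (2*m+1) = wnaf (2*m+2) + 1 → nlen (2*m+2) ≤ nlen (2*m+1)) ∧
    (wnaf (2*m+1) = wnaf (2*m+2) → nlen (2*m+1) ≤ nlen (2*m+2)) ∧
    (wnaf (2*m+1) = wnaf (2*m) + 1 → nlen (2*m) ≤ nlen (2*m+1)) := by
  intro m
  induction m using Nat.strong_induction_on with
  | _ m IH =>
    rcases Nat.eq_zero_or_pos m with rfl | hm
    · have w1 : wnaf 1 = 1 := by rw [wnaf]
      have w2 : wnaf 2 = 1 := by rw [wnaf_even 2 (by omega) (by omega)]; exact w1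
      have w0 : wnaf 0 = 0 := by rw [wnaf]
      have n1 : nlen 1 = 1 := by rw [nlen]
      have n2 : nlen 2 = 2 := by rw [nlen_even 2 (by omega) (by omega), show (2:ℕ)/2 = 1 from rfl, n1]
      have n0 : nlen 0 = 0 := by rw [nlen]
      norm_num [w0, w1, w2, n0, n1, n2]
    have h2m : wnaf (2*m) = wnaf m := by
      rw [wnaf_even (2*m) (by omega) (by omega), show 2*m/2 = m by omega]
    have h2m2 : wnaf (2*m+2) = wnaf (m+1) := by
      rw [wnaf_even (2*m+2) (by omega) (by omega), show (2*m+2)/2 = m+1 by omega]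
    have l2m : nlen (2*m) = nlen m + 1 := by
      rw [nlen_even (2*m) (by omega) (by omega), show 2*m/2 = m by omega]
    have l2m2 : nlen (2*m+2) = nlen (m+1) + 1 := by
      rw [nlen_even (2*m+2) (by omega) (by omega), show (2*m+2)/2 = m+1 by omega]
    rcases Nat.even_or_odd m with he | ho
    · have hme := Nat.even_iff.1 he
      have h1 : wnaf (2*m+1) = 1 + wnaf m := by
        rw [wnaf_odd1 (2*m+1) (by omega), show (2*m+1)/2 = m by omega]
      have l1 : nlen (2*m+1) = nlen m + 1 := by
        rw [nlen_odd1 (2*m+1) (by omega), show (2*m+1)/2 = m by omega]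
      have IH2 := IH (m/2) (by omega)
      rw [show 2*(m/2) = m by omega] at IH2
      refine ⟨⟨by omega, by omega⟩, ⟨by omega, by omega⟩, by omega, ?_, ?_, ?_⟩
      · intro hw
        rw [l2m2, l1]
        have := IH2.2.2.1 (by omega)
        omega
      · intro hw
        rw [l2m2, l1]
        have := IH2.2.2.2.2.2 (by omega)
        omega
      · intro _; omega
    · have hmo := Nat.odd_iff.1 ho
      have h1 : wnaf (2*m+1) = 1 + wnaf (m+1) := by
        rw [wnaf_odd3 (2*m+1) (by omega), show (2*m+1)/2 + 1 = m+1 by omega]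
      have l1 : nlen (2*m+1) = nlen (m+1) + 1 := by
        rw [nlen_odd3 (2*m+1) (by omega), show (2*m+1)/2 + 1 = m+1 by omega]
      have IH2 := IH ((m-1)/2) (by omega)
      rw [show 2*((m-1)/2) = m-1 by omega] at IH2
      rw [show m-1+1 = m by omega, show m-1+2 = m+1 by omega] at IH2
      refine ⟨⟨by omega, by omega⟩, ⟨by omega, by omega⟩, ?_, by omega, by omega, ?_⟩
      · intro hw
        rw [l2m, l1]
        have := IH2.2.2.2.1 (by omega)
        omega
      · intro hw
        rw [l2m, l1]
        have := IH2.2.2.2.2.1 (by omega)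
        omega

/-- even ≤ odd neighbor, and Lipschitz -/
lemma wnaf_even_le_succ (m : ℕ) : wnaf (2*m) ≤ wnaf (2*m+1) ∧ wnaf (2*m+1) ≤ wnaf (2*m) + 1 :=
  (wnaf_pairs m).1

lemma wnaf_even_le_pred (m : ℕ) : wnaf (2*m+2) ≤ wnaf (2*m+1) ∧ wnaf (2*m+1) ≤ wnaf (2*m+2) + 1 :=
  (wnaf_pairs m).2.1

lemma nlen_of_eq_succ (m : ℕ) (h : wnaf (2*m+1) = wnaf (2*m)) : nlen (2*m+1) ≤ nlen (2*m) :=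
  (wnaf_pairs m).2.2.1 h

lemma nlen_of_eq_pred (m : ℕ) (h : wnaf (2*m+1) = wnaf (2*m+2)) : nlen (2*m+1) ≤ nlen (2*m+2) :=
  (wnaf_pairs m).2.2.2.2.1 h

lemma cnt_succ_even (L : ℕ) (m : ℤ) (w : ℕ) (h : m % 2 = 0) :
    cnt (L+1) m w = cnt L (m/2) w := by simp [cnt, h]

lemma cnt_succ_odd (L : ℕ) (m : ℤ) (w : ℕ) (h : m % 2 = 1) :
    cnt (L+1) m (w+1) = cnt L ((m-1)/2) w + cnt L ((m+1)/2) w := by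
  have : ¬ (m % 2 = 0) := by omega
  simp [cnt, this]

lemma cnt_succ_odd0 (L : ℕ) (m : ℤ) (h : m % 2 = 1) : cnt (L+1) m 0 = 0 := by
  have : ¬ (m % 2 = 0) := by omega
  simp [cnt, this]

lemma cnt_w0 (L : ℕ) (m : ℤ) : cnt L m 0 = if m = 0 then 1 else 0 := by
  induction L generalizing m with
  | zero => simp [cnt]
  | succ L IH =>
    rcases (by omega : m % 2 = 0 ∨ m % 2 = 1) with h | h
    · rw [cnt_succ_even L m 0 h, IH]
      by_cases hm : m = 0 <;> simp [hm] <;> omega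
    · rw [cnt_succ_odd0 L m h]
      have : m ≠ 0 := by omega
      simp [this]

lemma cnt_zero_val (L : ℕ) (w : ℕ) : cnt L 0 w = if w = 0 then 1 else 0 := by
  induction L with
  | zero => simp [cnt]
  | succ L IH => rw [cnt_succ_even L 0 w (by omega)]; simpa using IH

lemma cnt_neg (L : ℕ) (m : ℤ) (w : ℕ) : cnt L (-m) w = cnt L m w := by
  induction L generalizing m w with
  | zero => simp [cnt, neg_eq_zero]
  | succ L IH =>
    rcases (by omega : m % 2 = 0 ∨ m % 2 = 1) with h | h
    · obtain ⟨t, rfl⟩ : ∃ t, m = 2*t := ⟨m/2, by omega⟩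
      rw [cnt_succ_even L _ w (by omega), cnt_succ_even L _ w (by omega),
        show (-(2*t))/2 = -t by omega, show (2*t)/2 = t by omega, IH]
    · obtain ⟨t, rfl⟩ : ∃ t, m = 2*t+1 := ⟨m/2, by omega⟩
      match w with
      | 0 => rw [cnt_succ_odd0 L _ (by omega), cnt_succ_odd0 L _ h]
      | (w+1) =>
        rw [cnt_succ_odd L _ w (by omega), cnt_succ_odd L _ w h,
          show (-(2*t+1)-1)/2 = -(t+1) by omega, show (-(2*t+1)+1)/2 = -t by omega,
          show (2*t+1-1)/2 = t by omega, show (2*t+1+1)/2 = t+1 by omega, IH, IH]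
        omega

lemma cnt_big (L : ℕ) (m : ℤ) (w : ℕ) (h : 2^L ≤ |m|) : cnt L m w = 0 := by
  induction L generalizing m w with
  | zero =>
    have h' := le_abs.mp h
    have : m ≠ 0 := by omega
    simp [cnt, this]
  | succ L IH =>
    have h' := le_abs.mp h
    have h2 : (2:ℤ)^(L+1) = 2 * 2^L := by ring
    rw [h2] at h'
    have hpos : (0:ℤ) < 2^L := by positivity
    rcases (by omega : m % 2 = 0 ∨ m % 2 = 1) with hp | hp
    · rw [cnt_succ_even L m w hp]
      exact IH _ _ (le_abs.mpr (by omega))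
    · match w with
      | 0 => exact cnt_succ_odd0 L m hp
      | (w+1) =>
        rw [cnt_succ_odd L m w hp, IH _ _ (le_abs.mpr (by omega)),
          IH _ _ (le_abs.mpr (by omega))]

lemma wnaf_odd_le (q : ℕ) (hq : q % 2 = 1) :
    wnaf q ≤ 1 + wnaf (q/2) ∧ wnaf q ≤ 1 + wnaf (q/2 + 1) := by
  rcases (by omega : q % 4 = 1 ∨ q % 4 = 3) with h | h
  · rw [wnaf_odd1 q h]
    have := (wnaf_pairs (q/4)).1.1
    rw [show 2*(q/4) = q/2 by omega] at this
    omega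
  · rw [wnaf_odd3 q h]
    have := (wnaf_pairs ((q-3)/4)).2.1.1
    rw [show 2*((q-3)/4)+1 = q/2 by omega, show 2*((q-3)/4)+2 = q/2+1 by omega] at this
    omega

lemma cnt_min (L : ℕ) (m : ℤ) (w : ℕ) (h : cnt L m w ≠ 0) : wnaf m.natAbs ≤ w := by
  induction L generalizing m w with
  | zero =>
    rw [cnt] at h
    rcases (em (m = 0 ∧ w = 0)) with ⟨rfl, rfl⟩ | hne
    · simp [wnaf]
    · simp [hne] at h
  | succ L IH =>
    rcases (by omega : m = 0 ∨ m ≠ 0) with rfl | hm0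
    · simp [wnaf]
    rcases (by omega : m % 2 = 0 ∨ m % 2 = 1) with hp | hp
    · rw [cnt_succ_even L m w hp] at h
      have h2 := IH _ _ h
      have habs : (m/2).natAbs = m.natAbs / 2 := by omega
      rw [habs] at h2
      have h3 : wnaf m.natAbs = wnaf (m.natAbs/2) :=
        wnaf_even _ (by omega) (by omega)
      omega
    · match w, h with
      | 0, h => rw [cnt_succ_odd0 L m hp] at h; exact absurd rfl h
      | (w+1), h =>
        rw [cnt_succ_odd L m w hp] at h
        set q := m.natAbs with hq
        have hqo : q % 2 = 1 := by omega
        have hle := wnaf_odd_le q hqo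
        have hset : (((m-1)/2).natAbs = q/2 ∧ ((m+1)/2).natAbs = q/2+1)
            ∨ (((m-1)/2).natAbs = q/2+1 ∧ ((m+1)/2).natAbs = q/2) := by
          rcases (by omega : 0 < m ∨ m < 0) with h1 | h1
          · left; omega
          · right; omega
        rcases (by omega : cnt L ((m-1)/2) w ≠ 0 ∨ cnt L ((m+1)/2) w ≠ 0) with hc | hc
        · have := IH _ _ hc
          rcases hset with ⟨h1, _⟩ | ⟨h1, _⟩ <;> rw [h1] at this <;> omega
        · have := IH _ _ hc
          rcases hset with ⟨_, h1⟩ | ⟨_, h1⟩ <;> rw [h1] at this <;> omega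

lemma cnt_pos (q : ℕ) : 1 ≤ cnt (nlen q) (q : ℤ) (wnaf q) := by
  induction q using Nat.strong_induction_on with
  | _ q IH =>
    rcases (by omega : q = 0 ∨ q % 2 = 0 ∧ 1 ≤ q ∨ q % 4 = 1 ∨ q % 4 = 3) with rfl | ⟨hp, h1⟩ | h | h
    · simp [cnt, nlen, wnaf]
    · rw [nlen_even q hp h1, wnaf_even q hp h1,
        cnt_succ_even _ _ _ (by omega), show (q:ℤ)/2 = ((q/2 : ℕ) : ℤ) by push_cast; omega]
      exact IH _ (by omega)
    · rw [nlen_odd1 q h, wnaf_odd1 q h, show 1 + wnaf (q/2) = wnaf (q/2) + 1 by omega,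
        cnt_succ_odd _ _ _ (by omega), show ((q:ℤ)-1)/2 = ((q/2 : ℕ) : ℤ) by push_cast; omega]
      have := IH (q/2) (by omega)
      omega
    · rw [nlen_odd3 q h, wnaf_odd3 q h, show 1 + wnaf (q/2+1) = wnaf (q/2+1) + 1 by omega,
        cnt_succ_odd _ _ _ (by omega), show ((q:ℤ)+1)/2 = ((q/2+1 : ℕ) : ℤ) by push_cast; omega]
      have := IH (q/2+1) (by omega)
      omega

lemma cnt_topsplit (L : ℕ) (m : ℤ) (w : ℕ) :
    cnt (L+1) m (w+1) = cnt L m (w+1) + cnt L (m - 2^L) w + cnt L (m + 2^L) w := by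
  induction L generalizing m w with
  | zero =>
    rcases (by omega : m % 2 = 0 ∨ m % 2 = 1) with hp | hp
    · rw [cnt_succ_even 0 m _ hp]
      have h1 : m - 2^0 ≠ 0 := by omega
      have h2 : m + 2^0 ≠ 0 := by omega
      have h3 : ¬ ((m:ℤ) = 0 ∧ w + 1 = 0) := by omega
      have h4 : ¬ ((m/2 : ℤ) = 0 ∧ w + 1 = 0) := by omega
      simp [cnt, h3, h4, h1, h2]
      split_ifs <;> omega
    · rw [cnt_succ_odd 0 m w hp]
      have h0 : ¬ ((m:ℤ) = 0 ∧ w + 1 = 0) := by omega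
      have e1 : (m - 1)/2 = 0 ↔ m - 2^0 = 0 := by omega
      have e2 : (m + 1)/2 = 0 ↔ m + 2^0 = 0 := by omega
      simp only [cnt, h0, if_false]
      by_cases hA : (m-1)/2 = 0 ∧ w = 0
      · have : m - 2^0 = 0 ∧ w = 0 := ⟨by omega, hA.2⟩
        have hB : ¬ ((m+1)/2 = 0 ∧ w = 0) := by omega
        have hB' : ¬ (m + 2^0 = 0 ∧ w = 0) := by omega
        simp [hA, hB, hB', this]
        split_ifs <;> omega
      · have hA' : ¬ (m - 2^0 = 0 ∧ w = 0) := by omega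
        by_cases hB : (m+1)/2 = 0 ∧ w = 0
        · have hB' : m + 2^0 = 0 ∧ w = 0 := ⟨by omega, hB.2⟩
          simp [hA, hB, hA', hB']
          split_ifs <;> omega
        · have hB' : ¬ (m + 2^0 = 0 ∧ w = 0) := by omega
          simp [hA, hB, hA', hB']
          split_ifs <;> omega
  | succ L IH =>
    have hpow : (2:ℤ)^(L+1) = 2 * 2^L := by ring
    rcases (by omega : m % 2 = 0 ∨ m % 2 = 1) with hp | hp
    · obtain ⟨t, rfl⟩ : ∃ t, m = 2*t := ⟨m/2, by omega⟩
      rw [cnt_succ_even (L+1) _ _ hp, show (2*t)/2 = t by omega, IH,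
        cnt_succ_even L _ (w+1) (by omega), show (2*t)/2 = t by omega,
        cnt_succ_even L _ w (by omega), cnt_succ_even L _ w (by omega),
        show (2*t - 2^(L+1))/2 = t - 2^L by rw [hpow]; omega,
        show (2*t + 2^(L+1))/2 = t + 2^L by rw [hpow]; omega]
    · obtain ⟨t, rfl⟩ : ∃ t, m = 2*t+1 := ⟨m/2, by omega⟩
      have e1 : (2*t+1-1)/2 = t := by omega
      have e2 : (2*t+1+1)/2 = t+1 := by omega
      have e3 : (2*t+1-2^(L+1)-1)/2 = t - 2^L := by rw [hpow]; omega
      have e4 : (2*t+1-2^(L+1)+1)/2 = t+1 - 2^L := by rw [hpow]; omega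
      have e5 : (2*t+1+2^(L+1)-1)/2 = t + 2^L := by rw [hpow]; omega
      have e6 : (2*t+1+2^(L+1)+1)/2 = t+1 + 2^L := by rw [hpow]; omega
      have ho1 : (2*t+1-2^(L+1)) % 2 = 1 := by rw [hpow]; omega
      have ho2 : (2*t+1+2^(L+1)) % 2 = 1 := by rw [hpow]; omega
      match w with
      | 0 =>
        rw [cnt_succ_odd (L+1) _ 0 hp, e1, e2, cnt_succ_odd L _ 0 hp, e1, e2,
          cnt_succ_odd0 L _ ho1, cnt_succ_odd0 L _ ho2,
          cnt_w0 (L+1) t, cnt_w0 (L+1) (t+1), cnt_w0 L t, cnt_w0 L (t+1)]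
        omega
      | (w+1) =>
        rw [cnt_succ_odd (L+1) _ (w+1) hp, e1, e2, IH, IH,
          cnt_succ_odd L _ (w+1) hp, e1, e2,
          cnt_succ_odd L _ w ho1, e3, e4,
          cnt_succ_odd L _ w ho2, e5, e6]
        have c1 : t + 1 - 2^L = t - 2^L + 1 := by ring
        have c2 : t + 1 + 2^L = t + 2^L + 1 := by ring
        rw [c1, c2]
        omega

lemma cnt_succ_odd' (L : ℕ) (m : ℤ) (w : ℕ) (h : m % 2 = 1) (hw : 1 ≤ w) :
    cnt (L+1) m w = cnt L ((m-1)/2) (w-1) + cnt L ((m+1)/2) (w-1) := by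
  obtain ⟨w', rfl⟩ : ∃ w', w = w' + 1 := ⟨w - 1, by omega⟩
  simpa using cnt_succ_odd L m w' h

lemma cnt_one (L : ℕ) (h : 1 ≤ L) : cnt L 1 1 = 1 := by
  obtain ⟨L', rfl⟩ : ∃ L', L = L' + 1 := ⟨L - 1, by omega⟩
  rw [cnt_succ_odd' L' 1 1 (by omega) le_rfl]
  norm_num [cnt_w0, cnt_zero_val]

lemma cnt_pad (q : ℕ) : ∀ L, nlen q ≤ L → cnt L (q : ℤ) (wnaf q) = cnt (nlen q) (q : ℤ) (wnaf q) := by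
  induction q using Nat.strong_induction_on with
  | _ q IH =>
    intro L hL
    rcases (by omega : q = 0 ∨ q = 1 ∨ q % 2 = 0 ∧ 2 ≤ q ∨ q % 4 = 1 ∧ 3 ≤ q ∨ q % 4 = 3) with
      rfl | rfl | ⟨hp, h2⟩ | ⟨hp, h2⟩ | hp
    · simp only [Nat.cast_zero, show wnaf 0 = 0 by rw [wnaf], cnt_zero_val]
    · have hn : nlen 1 = 1 := by rw [nlen]
      have hw : wnaf 1 = 1 := by rw [wnaf]
      have hL1 : 1 ≤ L := hn ▸ hL
      rw [hn, hw, Nat.cast_one, cnt_one L hL1, cnt_one 1 le_rfl]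
    · have hn := nlen_even q hp (by omega)
      have hw := wnaf_even q hp (by omega)
      obtain ⟨L', rfl⟩ : ∃ L', L = L' + 1 := ⟨L - 1, by omega⟩
      have hc : ((q : ℤ))/2 = ((q/2 : ℕ) : ℤ) := by push_cast; omega
      rw [hn, hw, cnt_succ_even L' _ _ (by omega), cnt_succ_even (nlen (q/2)) _ _ (by omega), hc,
        IH (q/2) (by omega) L' (by omega)]
    · -- q % 4 = 1, q ≥ 3 : e = q/2 even, o = q/2+1
      have hn := nlen_odd1 q hp
      have hw := wnaf_odd1 q hp
      obtain ⟨L', rfl⟩ : ∃ L', L = L' + 1 := ⟨L - 1, by omega⟩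
      have hL' : nlen (q/2) ≤ L' := by omega
      have hc1 : ((q : ℤ) - 1)/2 = ((q/2 : ℕ) : ℤ) := by push_cast; omega
      have hc2 : ((q : ℤ) + 1)/2 = ((q/2 + 1 : ℕ) : ℤ) := by push_cast; omega
      rw [hn, hw, show 1 + wnaf (q/2) = wnaf (q/2) + 1 by omega,
        cnt_succ_odd L' _ _ (by omega), cnt_succ_odd (nlen (q/2)) _ _ (by omega), hc1, hc2,
        IH (q/2) (by omega) L' hL']
      congr 1
      -- o-branch
      have hpair := (wnaf_pairs (q/4)).1
      rw [show 2*(q/4) = q/2 by omega] at hpair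
      rcases (by omega : wnaf (q/2+1) = wnaf (q/2) ∨ wnaf (q/2+1) = wnaf (q/2) + 1) with he | he
      · have hlen : nlen (q/2+1) ≤ nlen (q/2) := by
          have := nlen_of_eq_succ (q/4)
          rw [show 2*(q/4) = q/2 by omega] at this
          exact this he
        rw [← he, IH (q/2+1) (by omega) L' (by omega),
          IH (q/2+1) (by omega) (nlen (q/2)) (by omega)]
      · have z1 : cnt L' ((q/2+1 : ℕ) : ℤ) (wnaf (q/2)) = 0 := by
          by_contra h
          have := cnt_min _ _ _ h
          rw [Int.natAbs_natCast] at this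
          omega
        have z2 : cnt (nlen (q/2)) ((q/2+1 : ℕ) : ℤ) (wnaf (q/2)) = 0 := by
          by_contra h
          have := cnt_min _ _ _ h
          rw [Int.natAbs_natCast] at this
          omega
        rw [z1, z2]
    · -- q % 4 = 3 : e = q/2+1 even, o = q/2
      have hn := nlen_odd3 q hp
      have hw := wnaf_odd3 q hp
      obtain ⟨L', rfl⟩ : ∃ L', L = L' + 1 := ⟨L - 1, by omega⟩
      have hL' : nlen (q/2+1) ≤ L' := by omega
      have hc1 : ((q : ℤ) - 1)/2 = ((q/2 : ℕ) : ℤ) := by push_cast; omega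
      have hc2 : ((q : ℤ) + 1)/2 = ((q/2 + 1 : ℕ) : ℤ) := by push_cast; omega
      rw [hn, hw, show 1 + wnaf (q/2+1) = wnaf (q/2+1) + 1 by omega,
        cnt_succ_odd L' _ _ (by omega), cnt_succ_odd (nlen (q/2+1)) _ _ (by omega), hc1, hc2,
        IH (q/2+1) (by omega) L' hL']
      congr 1
      -- o-branch is q/2
      have hpair := (wnaf_pairs ((q-3)/4)).2.1
      rw [show 2*((q-3)/4)+1 = q/2 by omega, show 2*((q-3)/4)+2 = q/2+1 by omega] at hpair
      rcases (by omega : wnaf (q/2) = wnaf (q/2+1) ∨ wnaf (q/2) = wnaf (q/2+1) + 1) with he | he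
      · have hlen : nlen (q/2) ≤ nlen (q/2+1) := by
          have := nlen_of_eq_pred ((q-3)/4)
          rw [show 2*((q-3)/4)+1 = q/2 by omega, show 2*((q-3)/4)+2 = q/2+1 by omega] at this
          exact this he
        rw [← he, IH (q/2) (by omega) L' (by omega),
          IH (q/2) (by omega) (nlen (q/2+1)) (by omega)]
      · have z1 : cnt L' ((q/2 : ℕ) : ℤ) (wnaf (q/2+1)) = 0 := by
          by_contra h
          have := cnt_min _ _ _ h
          rw [Int.natAbs_natCast] at this
          omega
        have z2 : cnt (nlen (q/2+1)) ((q/2 : ℕ) : ℤ) (wnaf (q/2+1)) = 0 := by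
          by_contra h
          have := cnt_min _ _ _ h
          rw [Int.natAbs_natCast] at this
          omega
        rw [z1, z2]

lemma aseq_rec (k : ℕ) (h : 1 ≤ k) : aseq (k+2) = 2^k + aseq k := by
  obtain ⟨j, rfl⟩ : ∃ j, k = j + 1 := ⟨k - 1, by omega⟩
  rw [show j + 1 + 2 = j + 3 from rfl, aseq]

lemma aseq_succ : ∀ k, 1 ≤ k → aseq (k+1) + (k+1) % 2 = 2 * aseq k := by
  intro k
  induction k using Nat.strong_induction_on with
  | _ k IH =>
    intro hk
    match k, hk with
    | 1, _ => simp [aseq]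
    | 2, _ => simp [aseq]
    | (j+3), _ =>
      show aseq (j+4) + (j+4) % 2 = 2 * aseq (j+3)
      have h1 : aseq (j+4) = 2^(j+2) + aseq (j+2) := aseq_rec (j+2) (by omega)
      have h2 : aseq (j+3) = 2^(j+1) + aseq (j+1) := aseq_rec (j+1) (by omega)
      have h3 : aseq (j+2) + (j+2) % 2 = 2 * aseq (j+1) := IH (j+1) (by omega) (by omega)
      have hpow : (2:ℕ)^(j+2) = 2 * 2^(j+1) := by ring
      omega

lemma aseq_pos : ∀ k, 1 ≤ k → 1 ≤ aseq k := by
  intro k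
  induction k using Nat.strong_induction_on with
  | _ k IH =>
    intro hk
    match k, hk with
    | 1, _ => simp [aseq]
    | 2, _ => simp [aseq]
    | (j+3), _ =>
      have h1 : aseq (j+3) = 2^(j+1) + aseq (j+1) := aseq_rec (j+1) (by omega)
      have h2 := IH (j+1) (by omega) (by omega)
      have h3 : 1 ≤ 2^(j+1) := Nat.one_le_two_pow
      omega

lemma aseq_parity : ∀ k, 1 ≤ k → aseq k % 2 = k % 2 := by
  intro k
  induction k with
  | zero => omega
  | succ k IH =>
    intro _
    rcases (by omega : k = 0 ∨ 1 ≤ k) with rfl | hk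
    · simp [aseq]
    · have h1 := aseq_succ k hk
      have h2 := IH hk
      omega

lemma aseq_ge : ∀ k, k ≤ aseq k := by
  intro k
  induction k with
  | zero => simp [aseq]
  | succ k IH =>
    rcases (by omega : k = 0 ∨ k = 1 ∨ 2 ≤ k) with rfl | rfl | hk
    · simp [aseq]
    · simp [aseq]
    · have h1 := aseq_succ k (by omega)
      omega

lemma aseq_mono : ∀ i j, i ≤ j → aseq i ≤ aseq j := by
  have step : ∀ k, aseq k ≤ aseq (k+1) := by
    intro k
    rcases (by omega : k = 0 ∨ k = 1 ∨ 2 ≤ k) with rfl | rfl | hk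
    · simp [aseq]
    · simp [aseq]
    · have h1 := aseq_succ k (by omega)
      have h2 := aseq_ge k
      omega
  intro i j hij
  induction j with
  | zero => simp [show i = 0 by omega]
  | succ j IH =>
    rcases (by omega : i = j + 1 ∨ i ≤ j) with rfl | h
    · exact le_rfl
    · exact le_trans (IH h) (step j)

lemma aseq_strict : ∀ i j, 1 ≤ i → i < j → aseq i < aseq j := by
  have step : ∀ k, 1 ≤ k → aseq k < aseq (k+1) := by
    intro k hk
    have h1 := aseq_succ k hk
    have h2 := aseq_ge k
    rcases (by omega : k = 1 ∨ 2 ≤ k) with rfl | h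
    · simp [aseq]
    · omega
  intro i j h1 hij
  calc aseq i < aseq (i+1) := step i h1
    _ ≤ aseq j := aseq_mono _ _ (by omega)

lemma aseq_le_two_pow : ∀ k, aseq (k+1) ≤ 2^k := by
  intro k
  induction k with
  | zero => simp [aseq]
  | succ k IH =>
    have h1 := aseq_succ (k+1) (by omega)
    have hpow : (2:ℕ)^(k+1) = 2 * 2^k := by ring
    omega

lemma nlen_pos (n : ℕ) (h : 1 ≤ n) : 1 ≤ nlen n := by
  have := (nlen_eq_zero n)
  omega

lemma nlen_bounds : ∀ n, 1 ≤ n → aseq (nlen n) ≤ n ∧ n < aseq (nlen n + 1) := by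
  intro n
  induction n using Nat.strong_induction_on with
  | _ n IH =>
    intro hn
    rcases (by omega : n = 1 ∨ n % 2 = 0 ∧ 2 ≤ n ∨ n % 4 = 1 ∧ 5 ≤ n ∨ n % 4 = 3) with
      rfl | ⟨hp, h2⟩ | ⟨hp, h2⟩ | hp
    · have : nlen 1 = 1 := by rw [nlen]
      rw [this]
      simp [aseq]
    · have hm1 : 1 ≤ n/2 := by omega
      have hL := nlen_pos (n/2) hm1
      have hrec := nlen_even n hp (by omega)
      have hIH := IH (n/2) (by omega) hm1
      have hs1 := aseq_succ (nlen (n/2)) hL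
      have hs2 := aseq_succ (nlen (n/2) + 1) (by omega)
      rw [hrec]
      omega
    · have hee : (n/2) % 2 = 0 := by omega
      have hL := nlen_pos (n/2) (by omega)
      have hrec := nlen_odd1 n hp
      have hIH := IH (n/2) (by omega) (by omega)
      have hs1 := aseq_succ (nlen (n/2)) hL
      have hs2 := aseq_succ (nlen (n/2) + 1) (by omega)
      have hpar := aseq_parity (nlen (n/2) + 1) (by omega)
      rw [hrec]
      omega
    · have hee : (n/2+1) % 2 = 0 := by omega
      have hL := nlen_pos (n/2+1) (by omega)
      have hrec := nlen_odd3 n hp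
      have hIH := IH (n/2+1) (by omega) (by omega)
      have hs1 := aseq_succ (nlen (n/2+1)) hL
      have hs2 := aseq_succ (nlen (n/2+1) + 1) (by omega)
      have hpar := aseq_parity (nlen (n/2+1)) hL
      rw [hrec]
      omega

lemma nlen_char (n k : ℕ) (h : 1 ≤ n) : nlen n = k ↔ aseq k ≤ n ∧ n < aseq (k+1) := by
  constructor
  · rintro rfl; exact nlen_bounds n h
  · rintro ⟨h1, h2⟩
    have hb := nlen_bounds n h
    have hL := nlen_pos n h
    by_contra hne
    rcases (by omega : k < nlen n ∨ nlen n < k) with hlt | hlt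
    · have := aseq_mono (k+1) (nlen n) (by omega)
      omega
    · have := aseq_mono (nlen n + 1) k (by omega)
      omega

lemma wnaf_two_pow (p : ℕ) : wnaf (2^p) = 1 := by
  induction p with
  | zero => rw [pow_zero, wnaf]
  | succ p IH =>
    rw [wnaf_even (2^(p+1)) (by simp [pow_succ, Nat.mul_mod]) (Nat.one_le_two_pow),
      show 2^(p+1)/2 = 2^p by rw [pow_succ]; omega, IH]

lemma nlen_in_interval (n j : ℕ) (hn : 1 ≤ n) (h1 : aseq j ≤ n) (h2 : n < aseq (j+1)) :
    nlen n = j := (nlen_char n j hn).mpr ⟨h1, h2⟩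

lemma interval_of_nlen (n : ℕ) (hn : 1 ≤ n) : aseq (nlen n) ≤ n ∧ n < aseq (nlen n + 1) :=
  nlen_bounds n hn

lemma lt_two_pow_of_interval (n j : ℕ) (h2 : n < aseq (j+1)) : n < 2^j :=
  lt_of_lt_of_le h2 (aseq_le_two_pow j)

lemma wnaf_sym (j : ℕ) : ∀ n, 1 ≤ j → aseq j ≤ n → n < aseq (j+1) → wnaf (2^j - n) = wnaf n := by
  induction j using Nat.strong_induction_on with
  | _ j IH =>
    intro n hj h1 h2
    have hn1 : 1 ≤ n := le_trans (le_trans (aseq_pos j hj) le_rfl) h1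
    have hlt : n < 2^j := lt_two_pow_of_interval n j h2
    have hL : nlen n = j := nlen_in_interval n j hn1 h1 h2
    rcases (by omega : j = 1 ∨ 2 ≤ j) with rfl | hj2
    · have : n = 1 := by simp [aseq] at h1 h2; omega
      subst this
      norm_num
    have hn2 : 2 ≤ n := le_trans (by calc (2:ℕ) = aseq 2 := by simp [aseq]
                                         _ ≤ aseq j := aseq_mono 2 j hj2) h1
    have hpow : 2^j = 2 * 2^(j-1) := by
      rw [← pow_succ']; congr 1; omega
    have hpow4 : 2^j = 4 * 2^(j-2) := by
      rw [show j = (j-2)+2 by omega, pow_add]; ring_nf; rw [show 2+(j-2)-2 = j-2 by omega]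
    rcases (by omega : n % 2 = 0 ∨ n % 4 = 1 ∨ n % 4 = 3) with hp | hp | hp
    · -- even
      have hrec := nlen_even n hp (by omega)
      have hb := interval_of_nlen (n/2) (by omega)
      rw [hL] at hrec
      rw [show nlen (n/2) = j - 1 by omega] at hb
      rw [wnaf_even (2^j - n) (by omega) (by omega),
        show (2^j - n)/2 = 2^(j-1) - n/2 by omega,
        IH (j-1) (by omega) (n/2) (by omega) hb.1 (by have := hb.2; omega),
        ← wnaf_even n hp (by omega)]
    · -- n % 4 = 1
      have hrec := nlen_odd1 n hp
      have hb := interval_of_nlen (n/2) (by omega)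
      rw [hL] at hrec
      rw [show nlen (n/2) = j - 1 by omega] at hb
      have hm : (2^j - n) % 4 = 3 := by omega
      rw [wnaf_odd3 (2^j - n) hm, show (2^j - n)/2 + 1 = 2^(j-1) - n/2 by omega,
        IH (j-1) (by omega) (n/2) (by omega) hb.1 (by have := hb.2; omega),
        wnaf_odd1 n hp]
    · -- n % 4 = 3
      have hrec := nlen_odd3 n hp
      have hb := interval_of_nlen (n/2+1) (by omega)
      rw [hL] at hrec
      rw [show nlen (n/2+1) = j - 1 by omega] at hb
      have hm : (2^j - n) % 4 = 1 := by omega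
      rw [wnaf_odd1 (2^j - n) hm, show (2^j - n)/2 = 2^(j-1) - (n/2+1) by omega,
        IH (j-1) (by omega) (n/2+1) (by omega) hb.1 (by have := hb.2; omega),
        wnaf_odd3 n hp]

lemma wnaf_shift (j : ℕ) : ∀ n, 1 ≤ j → aseq j ≤ n → n < aseq (j+1) → wnaf (2^j + n) = 1 + wnaf n := by
  induction j using Nat.strong_induction_on with
  | _ j IH =>
    intro n hj h1 h2
    have hn1 : 1 ≤ n := le_trans (aseq_pos j hj) h1
    have hL : nlen n = j := nlen_in_interval n j hn1 h1 h2
    rcases (by omega : j = 1 ∨ 2 ≤ j) with rfl | hj2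
    · have : n = 1 := by simp [aseq] at h1 h2; omega
      subst this
      rw [show 2^1 + 1 = 3 by norm_num, wnaf_odd3 3 (by norm_num),
        show 3/2+1 = 2 by norm_num, wnaf_even 2 rfl one_le_two,
        show 2/2 = 1 from rfl]
    have hn2 : 2 ≤ n := le_trans (by calc (2:ℕ) = aseq 2 := by simp [aseq]
                                         _ ≤ aseq j := aseq_mono 2 j hj2) h1
    have hpow : 2^j = 2 * 2^(j-1) := by
      rw [← pow_succ']; congr 1; omega
    have hpow4 : 2^j = 4 * 2^(j-2) := by
      rw [show j = (j-2)+2 by omega, pow_add]; ring_nf; rw [show 2+(j-2)-2 = j-2 by omega]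
    rcases (by omega : n % 2 = 0 ∨ n % 4 = 1 ∨ n % 4 = 3) with hp | hp | hp
    · have hrec := nlen_even n hp (by omega)
      have hb := interval_of_nlen (n/2) (by omega)
      rw [hL] at hrec
      rw [show nlen (n/2) = j - 1 by omega] at hb
      rw [wnaf_even (2^j + n) (by omega) (by omega),
        show (2^j + n)/2 = 2^(j-1) + n/2 by omega,
        IH (j-1) (by omega) (n/2) (by omega) hb.1 (by have := hb.2; omega),
        ← wnaf_even n hp (by omega)]
    · have hrec := nlen_odd1 n hp
      have hb := interval_of_nlen (n/2) (by omega)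
      rw [hL] at hrec
      rw [show nlen (n/2) = j - 1 by omega] at hb
      have hm : (2^j + n) % 4 = 1 := by omega
      rw [wnaf_odd1 (2^j + n) hm, show (2^j + n)/2 = 2^(j-1) + n/2 by omega,
        IH (j-1) (by omega) (n/2) (by omega) hb.1 (by have := hb.2; omega),
        wnaf_odd1 n hp]
    · have hrec := nlen_odd3 n hp
      have hb := interval_of_nlen (n/2+1) (by omega)
      rw [hL] at hrec
      rw [show nlen (n/2+1) = j - 1 by omega] at hb
      have hm : (2^j + n) % 4 = 3 := by omega
      rw [wnaf_odd3 (2^j + n) hm, show (2^j + n)/2 + 1 = 2^(j-1) + (n/2+1) by omega,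
        IH (j-1) (by omega) (n/2+1) (by omega) hb.1 (by have := hb.2; omega),
        wnaf_odd3 n hp]

lemma wnaf_pad_shift (p : ℕ) : ∀ m, nlen m < p → wnaf (2^p + m) = 1 + wnaf m := by
  induction p using Nat.strong_induction_on with
  | _ p IHp =>
    intro m
    induction m using Nat.strong_induction_on with
    | _ m IH =>
      intro hm
      rcases (by omega : m = 0 ∨ 1 ≤ m) with rfl | hm1
      · simp only [Nat.add_zero]
        rw [wnaf_two_pow p, show wnaf 0 = 0 by rw [wnaf]]
      have hp2 : 2 ≤ p := by
        have := nlen_pos m hm1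
        omega
      have hpow : 2^p = 2 * 2^(p-1) := by
        rw [← pow_succ']; congr 1; omega
      have hpow4 : 2^p = 4 * 2^(p-2) := by
        rw [show p = (p-2)+2 by omega, pow_add]; ring_nf; rw [show 2+(p-2)-2 = p-2 by omega]
      rcases (by omega : m % 2 = 0 ∨ m % 4 = 1 ∨ m % 4 = 3) with hp | hp | hp
      · have hrec := nlen_even m hp (by omega)
        rw [wnaf_even (2^p + m) (by omega) (by omega),
          show (2^p + m)/2 = 2^(p-1) + m/2 by omega,
          IHp (p-1) (by omega) (m/2) (by omega),
          ← wnaf_even m hp (by omega)]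
      · have hrec := nlen_odd1 m hp
        have hmod : (2^p + m) % 4 = 1 := by omega
        rw [wnaf_odd1 (2^p + m) hmod, show (2^p + m)/2 = 2^(p-1) + m/2 by omega,
          IHp (p-1) (by omega) (m/2) (by omega), wnaf_odd1 m hp]
      · have hrec := nlen_odd3 m hp
        have hmod : (2^p + m) % 4 = 3 := by omega
        rw [wnaf_odd3 (2^p + m) hmod, show (2^p + m)/2 + 1 = 2^(p-1) + (m/2+1) by omega,
          IHp (p-1) (by omega) (m/2+1) (by omega), wnaf_odd3 m hp]

def Rset (L : ℕ) (m : ℤ) (w : ℕ) : Set (Fin L → ℤ) :=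
  {b | IsBSDDigits b ∧ bsdVal b = m ∧ {j | b j ≠ 0}.ncard = w}

noncomputable def wt {L : ℕ} (b : Fin L → ℤ) : ℕ := ∑ j, if b j = 0 then 0 else 1

lemma ncard_eq_wt {L : ℕ} (b : Fin L → ℤ) : {j | b j ≠ 0}.ncard = wt b := by
  classical
  have h : {j | b j ≠ 0} = ↑(Finset.univ.filter (fun j => b j ≠ 0)) := by ext j; simp
  rw [h, Set.ncard_coe_finset, Finset.card_filter, wt]
  exact Finset.sum_congr rfl (fun j _ => by by_cases hj : b j = 0 <;> simp [hj])

lemma wt_cons {L : ℕ} (c : ℤ) (b : Fin L → ℤ) :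
    wt (Fin.cons c b) = (if c = 0 then 0 else 1) + wt b := by
  unfold wt
  rw [Fin.sum_univ_succ, Fin.cons_zero]
  congr 1

lemma bsdVal_cons {L : ℕ} (c : ℤ) (b : Fin L → ℤ) :
    bsdVal (Fin.cons c b) = c + 2 * bsdVal b := by
  unfold bsdVal
  rw [Fin.sum_univ_succ, Fin.cons_zero]
  simp only [Fin.cons_succ, Fin.val_succ, pow_succ, Fin.val_zero, pow_zero, mul_one]
  rw [Finset.mul_sum]
  exact congrArg (c + ·) (Finset.sum_congr rfl (fun j _ => by ring))

lemma digits_cons {L : ℕ} (c : ℤ) (b : Fin L → ℤ) :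
    IsBSDDigits (Fin.cons c b) ↔ c ∈ ({-1, 0, 1} : Set ℤ) ∧ IsBSDDigits b := by
  constructor
  · intro h
    exact ⟨by have := h 0; rwa [Fin.cons_zero] at this,
      fun j => by have := h j.succ; rwa [Fin.cons_succ] at this⟩
  · rintro ⟨hc, hb⟩ j
    refine Fin.cases ?_ ?_ j
    · rwa [Fin.cons_zero]
    · intro i; rw [Fin.cons_succ]; exact hb i

lemma Rset_finite (L : ℕ) (m : ℤ) (w : ℕ) : (Rset L m w).Finite := by
  apply Set.Finite.subset (Set.Finite.pi (fun _ : Fin L => (by norm_num : ({-1,0,1} : Set ℤ).Finite)))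
  intro b hb
  rw [Set.mem_pi]
  intro j _
  exact hb.1 j

lemma val_parity {L : ℕ} (b : Fin (L+1) → ℤ) (hd : IsBSDDigits b) :
    bsdVal b = b 0 + 2 * bsdVal (Fin.tail b) := by
  conv_lhs => rw [← Fin.cons_self_tail b]
  rw [bsdVal_cons]

lemma ncard_Rset : ∀ (L : ℕ) (m : ℤ) (w : ℕ), (Rset L m w).ncard = cnt L m w := by
  intro L
  induction L with
  | zero =>
    intro m w
    by_cases h : m = 0 ∧ w = 0
    · obtain ⟨rfl, rfl⟩ := h
      have : Rset 0 0 0 = Set.univ := by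
        ext b
        simp only [Rset, Set.mem_setOf_eq, Set.mem_univ, iff_true]
        refine ⟨fun j => j.elim0, by simp [bsdVal], ?_⟩
        have : {j : Fin 0 | b j ≠ 0} = ∅ := Set.eq_empty_of_isEmpty _
        rw [this, Set.ncard_empty]
      rw [this, Set.ncard_univ, Nat.card_unique]
      simp [cnt]
    · have : Rset 0 m w = ∅ := by
        ext b
        simp only [Rset, Set.mem_setOf_eq, Set.mem_empty_iff_false, iff_false]
        rintro ⟨-, hv, hw⟩
        apply h
        constructor
        · rw [← hv]; simp [bsdVal]
        · rw [← hw]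
          have : {j : Fin 0 | b j ≠ 0} = ∅ := Set.eq_empty_of_isEmpty _
          rw [this, Set.ncard_empty]
      rw [this, Set.ncard_empty]
      simp [cnt, h]
  | succ L IH =>
    intro m w
    rcases (by omega : m % 2 = 0 ∨ m % 2 = 1) with hp | hp
    · have hset : Rset (L+1) m w = Fin.cons 0 '' Rset L (m/2) w := by
        ext b
        constructor
        · rintro ⟨hd, hv, hw⟩
          have hpar := val_parity b hd
          have hb0 : b 0 = -1 ∨ b 0 = 0 ∨ b 0 = 1 := by simpa using hd 0
          have hb00 : b 0 = 0 := by omega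
          refine ⟨Fin.tail b, ⟨fun j => hd j.succ, by omega, ?_⟩, ?_⟩
          · rw [ncard_eq_wt] at hw ⊢
            rw [← Fin.cons_self_tail b, wt_cons, hb00] at hw
            simpa using hw
          · rw [← hb00, Fin.cons_self_tail]
        · rintro ⟨b', ⟨hd, hv, hw⟩, rfl⟩
          refine ⟨(digits_cons _ _).2 ⟨by norm_num, hd⟩, by rw [bsdVal_cons]; omega, ?_⟩
          rw [ncard_eq_wt] at hw ⊢
          rw [wt_cons]
          simpa using hw
      rw [hset, Set.ncard_image_of_injective _ (Fin.cons_right_injective 0), IH,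
        cnt_succ_even L m w hp]
    · match w with
      | 0 =>
        have hset : Rset (L+1) m 0 = ∅ := by
          ext b
          simp only [Rset, Set.mem_setOf_eq, Set.mem_empty_iff_false, iff_false]
          rintro ⟨hd, hv, hw⟩
          have hpar := val_parity b hd
          have hb0 : b 0 = -1 ∨ b 0 = 0 ∨ b 0 = 1 := by simpa using hd 0
          have hb00 : b 0 ≠ 0 := by omega
          rw [ncard_eq_wt, ← Fin.cons_self_tail b, wt_cons] at hw
          simp [hb00] at hw
        rw [hset, Set.ncard_empty, cnt_succ_odd0 L m hp]
      | (w+1) =>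
        have hset : Rset (L+1) m (w+1) =
            Fin.cons 1 '' Rset L ((m-1)/2) w ∪ Fin.cons (-1) '' Rset L ((m+1)/2) w := by
          ext b
          constructor
          · rintro ⟨hd, hv, hw⟩
            have hpar := val_parity b hd
            have hb0 : b 0 = -1 ∨ b 0 = 0 ∨ b 0 = 1 := by simpa using hd 0
            rw [ncard_eq_wt, ← Fin.cons_self_tail b, wt_cons] at hw
            have hb0' : b 0 = 1 ∨ b 0 = -1 := by omega
            rcases hb0' with h1 | h1
            · left
              refine ⟨Fin.tail b, ⟨fun j => hd j.succ, by omega, ?_⟩, ?_⟩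
              · rw [ncard_eq_wt]
                rw [h1] at hw
                simp at hw
                omega
              · rw [← h1, Fin.cons_self_tail]
            · right
              refine ⟨Fin.tail b, ⟨fun j => hd j.succ, by omega, ?_⟩, ?_⟩
              · rw [ncard_eq_wt]
                rw [h1] at hw
                simp at hw
                omega
              · rw [← h1, Fin.cons_self_tail]
          · rintro (⟨b', ⟨hd, hv, hw⟩, rfl⟩ | ⟨b', ⟨hd, hv, hw⟩, rfl⟩)
            · refine ⟨(digits_cons _ _).2 ⟨by norm_num, hd⟩, by rw [bsdVal_cons]; omega, ?_⟩
              rw [ncard_eq_wt] at hw ⊢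
              rw [wt_cons]
              simp
              omega
            · refine ⟨(digits_cons _ _).2 ⟨by norm_num, hd⟩, by rw [bsdVal_cons]; omega, ?_⟩
              rw [ncard_eq_wt] at hw ⊢
              rw [wt_cons]
              simp
              omega
        have hdisj : Disjoint (@Fin.cons L (fun _ => ℤ) 1 '' Rset L ((m-1)/2) w)
            (@Fin.cons L (fun _ => ℤ) (-1) '' Rset L ((m+1)/2) w) := by
          rw [Set.disjoint_left]
          rintro b ⟨b1, -, rfl⟩ ⟨b2, -, hb2⟩
          have := congrArg (fun f => f 0) hb2
          simp [Fin.cons_zero] at this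
        rw [hset, Set.ncard_union_eq hdisj ((Rset_finite _ _ _).image _) ((Rset_finite _ _ _).image _),
          Set.ncard_image_of_injective _ (Fin.cons_right_injective 1),
          Set.ncard_image_of_injective _ (Fin.cons_right_injective (-1)), IH, IH,
          cnt_succ_odd L m w hp]

lemma digit0_even {L : ℕ} (b : Fin (L+1) → ℤ) (hd : IsBSDDigits b) (m : ℤ)
    (hv : bsdVal b = m) (hm : m % 2 = 0) : b 0 = 0 := by
  have hp := val_parity b hd
  have h0 : b 0 = -1 ∨ b 0 = 0 ∨ b 0 = 1 := by simpa using hd 0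
  omega

lemma naf_step (L : ℕ) (n' : ℕ) (d : ℤ) (hd3 : d ∈ ({-1,0,1} : Set ℤ))
    (hpar : d ≠ 0 → n' % 2 = 0) (hLd : L = 0 → d ≠ 0)
    (h : HasNAFLen (n' : ℤ) L) : HasNAFLen (d + 2 * n') (L + 1) := by
  obtain ⟨b', hb', hv'⟩ := h
  refine ⟨Fin.cons d b', ⟨(digits_cons d b').2 ⟨hd3, hb'.1⟩, ?_, ?_⟩,
    by rw [bsdVal_cons, hv']⟩
  · rintro ⟨jv, hj⟩ h2
    match jv, hj, h2 with
    | 0, hj, h2 =>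
      have h2' : 0 + 1 < L + 1 := by simpa using h2
      by_cases hd : d = 0
      · left
        show d = 0
        exact hd
      · right
        obtain ⟨L', rfl⟩ : ∃ L', L = L' + 1 := ⟨L - 1, by omega⟩
        show b' ⟨0, by omega⟩ = 0
        have : b' 0 = 0 := digit0_even b' hb'.1 (n' : ℤ) hv' (by have := hpar hd; omega)
        exact this
    | (i+1), hj, h2 =>
      have h2' : (i+1) + 1 < L + 1 := by simpa using h2
      have h3 : i + 1 < L := by omega
      have := hb'.2.1 ⟨i, by omega⟩ h3
      rcases this with h4 | h4
      · left
        show b' ⟨i, by omega⟩ = 0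
        exact h4
      · right
        show b' ⟨i+1, by omega⟩ = 0
        exact h4
  · intro hpos
    rcases Nat.eq_zero_or_pos L with hL0 | hL1
    · subst hL0
      show d ≠ 0
      exact hLd rfl
    · obtain ⟨L', rfl⟩ : ∃ L', L = L' + 1 := ⟨L - 1, by omega⟩
      show b' ⟨L', by omega⟩ ≠ 0
      have := hb'.2.2 (by omega : 0 < L' + 1)
      exact this

lemma hasnaf : ∀ n : ℕ, HasNAFLen (n : ℤ) (nlen n) := by
  intro n
  induction n using Nat.strong_induction_on with
  | _ n IH =>
    rcases (by omega : n = 0 ∨ 1 ≤ n) with rfl | hn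
    · rw [show nlen 0 = 0 by rw [nlen]]
      exact ⟨fun _ => 0, ⟨fun j => j.elim0, fun j => j.elim0, fun h => absurd h (by norm_num)⟩,
        by simp [bsdVal]⟩
    rcases (by omega : n % 2 = 0 ∨ n % 4 = 1 ∨ n % 4 = 3) with hp | hp | hp
    · rw [nlen_even n hp hn, show ((n:ℕ):ℤ) = 0 + 2 * ((n/2 : ℕ) : ℤ) by push_cast; omega]
      exact naf_step _ _ _ (by norm_num) (fun h => absurd rfl h)
        (fun h => absurd ((nlen_eq_zero _).1 h) (by omega)) (IH (n/2) (by omega))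
    · rw [nlen_odd1 n hp, show ((n:ℕ):ℤ) = 1 + 2 * ((n/2 : ℕ) : ℤ) by push_cast; omega]
      exact naf_step _ _ _ (by norm_num) (fun _ => by omega)
        (fun _ => by norm_num) (IH (n/2) (by omega))
    · rw [nlen_odd3 n hp, show ((n:ℕ):ℤ) = -1 + 2 * ((n/2+1 : ℕ) : ℤ) by push_cast; omega]
      exact naf_step _ _ _ (by norm_num) (fun _ => by omega)
        (fun _ => by norm_num) (IH (n/2+1) (by omega))

lemma naf_unique : ∀ (k : ℕ) (b : Fin k → ℤ) (m : ℤ), IsReducedNAF b → bsdVal b = m →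
    0 ≤ m → k = nlen m.toNat := by
  intro k
  induction k with
  | zero =>
    intro b m _ hv hm
    have : m = 0 := by rw [← hv]; simp [bsdVal]
    subst this
    rw [show (0:ℤ).toNat = 0 from rfl, show nlen 0 = 0 by rw [nlen]]
  | succ k IH =>
    intro b m hb hv hm
    obtain ⟨hd, hadj, hlead⟩ := hb
    have hpar := val_parity b hd
    have h0 : b 0 = -1 ∨ b 0 = 0 ∨ b 0 = 1 := by simpa using hd 0
    have htail : IsReducedNAF (Fin.tail b) ∧ 0 < k ∨ k = 0 := by
      rcases (by omega : k = 0 ∨ 0 < k) with h | h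
      · right; exact h
      · left
        refine ⟨⟨fun j => hd j.succ, ?_, ?_⟩, h⟩
        · rintro ⟨jv, hj⟩ h2
          have h2' : jv + 1 < k := by simpa using h2
          have := hadj ⟨jv+1, by omega⟩ (by omega : (jv+1)+1 < k+1)
          rcases this with h4 | h4
          · left; exact h4
          · right; exact h4
        · intro hk
          have := hlead (by omega : 0 < k + 1)
          show b ⟨k - 1 + 1, by omega⟩ ≠ 0
          have he : (⟨k + 1 - 1, by omega⟩ : Fin (k+1)) = ⟨k - 1 + 1, by omega⟩ := by
            ext; simp; omega
          rwa [he] at this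
    rcases (by omega : m % 2 = 0 ∨ m % 2 = 1) with hmp | hmp
    · -- even
      have hb00 : b 0 = 0 := by omega
      rcases htail with ⟨ht, hk⟩ | hk0
      · rcases (by omega : m = 0 ∨ 1 ≤ m) with rfl | hm1
        · have hIH := IH (Fin.tail b) 0 ht (by omega) (by omega)
          rw [show (0:ℤ).toNat = 0 from rfl, show nlen 0 = 0 by rw [nlen]] at hIH
          omega
        · have hIH := IH (Fin.tail b) (m/2) ht (by omega) (by omega)
          have htn : (m/2).toNat = m.toNat / 2 := by omega
          rw [htn] at hIH
          rw [nlen_even m.toNat (by omega) (by omega)]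
          omega
      · exfalso
        subst hk0
        have := hlead (by omega : 0 < 0 + 1)
        have he : (⟨0 + 1 - 1, by omega⟩ : Fin 1) = 0 := rfl
        rw [he] at this
        exact this hb00
    · -- odd
      have hb0ne : b 0 = 1 ∨ b 0 = -1 := by omega
      rcases htail with ⟨ht, hk⟩ | hk0
      · -- k ≥ 1 : adjacent digit is 0, so tail value is even
        have hadj0 := hadj ⟨0, by omega⟩ (by omega : 0 + 1 < k + 1)
        have hb1 : b ⟨1, by omega⟩ = 0 := by
          rcases hadj0 with h4 | h4
          · exfalso; have : b 0 = 0 := h4; omega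
          · exact h4
        obtain ⟨k', rfl⟩ : ∃ k', k = k' + 1 := ⟨k - 1, by omega⟩
        have htp := val_parity (Fin.tail b) ht.1
        have htail0 : Fin.tail b 0 = 0 := hb1
        rcases hb0ne with h1 | h1
        · -- b 0 = 1 : m % 4 = 1
          have hIH := IH (Fin.tail b) ((m-1)/2) ht (by omega) (by omega)
          have hm4 : m % 4 = 1 := by omega
          have htn : ((m-1)/2).toNat = m.toNat / 2 := by omega
          rw [htn] at hIH
          rw [nlen_odd1 m.toNat (by omega)]
          omega
        · -- b 0 = -1 : m % 4 = 3
          have hIH := IH (Fin.tail b) ((m+1)/2) ht (by omega) (by omega)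
          have hm4 : m % 4 = 3 := by omega
          have htn : ((m+1)/2).toNat = m.toNat / 2 + 1 := by omega
          rw [htn] at hIH
          rw [nlen_odd3 m.toNat (by omega)]
          omega
      · -- k = 0 : single digit, m = b 0 = 1
        subst hk0
        have hval : m = b 0 := by
          rw [← hv, bsdVal]
          rw [Fin.sum_univ_succ]
          simp [bsdVal]
        have : m = 1 := by omega
        subst this
        rw [show (1:ℤ).toNat = 1 from rfl, show nlen 1 = 1 by rw [nlen]]

lemma hasnaf_iff (n k : ℕ) : HasNAFLen (n:ℤ) k ↔ k = nlen n := by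
  constructor
  · rintro ⟨b, hb, hv⟩
    have := naf_unique k b (n:ℤ) hb hv (by positivity)
    simpa using this
  · rintro rfl
    exact hasnaf n

lemma nafLen_eq (n : ℕ) : nafLen n = nlen n := by
  unfold nafLen
  have : {k | HasNAFLen (n:ℤ) k} = {nlen n} := by
    ext k
    simp [hasnaf_iff]
  rw [this, csInf_singleton]

lemma wnaf_pos (n : ℕ) (h : 1 ≤ n) : 1 ≤ wnaf n := by
  rcases Nat.eq_zero_or_pos (wnaf n) with hz | hp
  · exfalso
    have h1 := cnt_pos n
    rw [hz, cnt_w0] at h1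
    have : (n:ℤ) ≠ 0 := by omega
    simp [this, show n ≠ 0 by omega] at h1
  · exact hp

lemma minWeight_eq (n : ℕ) : minWeight n = wnaf n := by
  have hmem : wnaf n ∈ {w : ℕ | ∃ b : Fin (nafLen n) → ℤ,
      IsBSDDigits b ∧ bsdVal b = (n:ℤ) ∧ {j | b j ≠ 0}.ncard = w} := by
    have h1 : (Rset (nlen n) (n:ℤ) (wnaf n)).ncard = cnt (nlen n) (n:ℤ) (wnaf n) :=
      ncard_Rset _ _ _
    have h2 := cnt_pos n
    have h3 : (Rset (nlen n) (n:ℤ) (wnaf n)).Nonempty :=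
      Set.nonempty_of_ncard_ne_zero (by omega)
    obtain ⟨b, hb⟩ := h3
    rw [Set.mem_setOf_eq, nafLen_eq]
    exact ⟨b, hb.1, hb.2.1, hb.2.2⟩
  apply le_antisymm
  · exact Nat.sInf_le hmem
  · apply le_csInf ⟨_, hmem⟩
    rintro w ⟨b, h1, h2, h3⟩
    have hfin := Rset_finite (nafLen n) (n:ℤ) w
    have hpos : (Rset (nafLen n) (n:ℤ) w).ncard ≠ 0 := by
      have := (Set.ncard_pos hfin).mpr ⟨b, h1, h2, h3⟩
      omega
    rw [ncard_Rset] at hpos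
    have := cnt_min _ _ _ hpos
    simpa using this

lemma Mfun_eq (n : ℕ) : Mfun n = cnt (nlen n) (n:ℤ) (wnaf n) := by
  show (Rset (nafLen n) (n:ℤ) (minWeight n)).ncard = _
  rw [nafLen_eq, minWeight_eq, ncard_Rset]

lemma NAFInterval_ncard (j : ℕ) (hj : 1 ≤ j) :
    (NAFInterval j).ncard = aseq (j+1) - aseq j := by
  have : NAFInterval j = Set.Ico (aseq j) (aseq (j+1)) := by
    ext n
    simp only [NAFInterval, Set.mem_setOf_eq, Set.mem_Ico]
    rw [hasnaf_iff]
    constructor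
    · intro h
      rcases Nat.eq_zero_or_pos n with rfl | hn
      · exfalso
        rw [show nlen 0 = 0 by rw [nlen]] at h
        omega
      · exact (nlen_char n j hn).mp h.symm
    · rintro ⟨h1, h2⟩
      have hn : 1 ≤ n := le_trans (aseq_pos j hj) h1
      exact ((nlen_char n j hn).mpr ⟨h1, h2⟩).symm
  rw [this, ← Finset.coe_Ico, Set.ncard_coe_finset, Nat.card_Ico]

lemma cnt_big_nat (L : ℕ) (N : ℕ) (w : ℕ) (h : 2^L ≤ N) : cnt L (N : ℤ) w = 0 := by
  apply cnt_big
  rw [abs_of_nonneg (by positivity)]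
  exact_mod_cast h

lemma partC (j v : ℕ) (hj : 1 ≤ j) (hv : v < aseq (j+1) - aseq j) :
    Mfun (2^(j+1) + aseq j + v) = Mfun (aseq j + v) := by
  have h1 : aseq j ≤ aseq j + v := Nat.le_add_right _ _
  have haseq1 : 1 ≤ aseq j := aseq_pos j hj
  have h2 : aseq j + v < aseq (j+1) := by omega
  have hn1 : 1 ≤ aseq j + v := by omega
  have hlen : nlen (aseq j + v) = j := nlen_in_interval _ j hn1 h1 h2
  have hW1 : 1 ≤ wnaf (aseq j + v) := wnaf_pos _ hn1
  obtain ⟨W, hW⟩ : ∃ W, wnaf (aseq j + v) = W + 1 := ⟨wnaf (aseq j + v) - 1, by omega⟩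
  have hlt : aseq j + v < 2^j := lt_two_pow_of_interval _ j h2
  have haseqr : aseq (j+3) = 2^(j+1) + aseq (j+1) := aseq_rec (j+1) (by omega)
  have haseqr2 : aseq (j+2) = 2^j + aseq j := aseq_rec j hj
  have hpow : (2:ℕ)^(j+1) = 2 * 2^j := by ring
  have hNlen : nlen (2^(j+1) + aseq j + v) = j + 2 := by
    apply nlen_in_interval _ _ (by omega)
    · rw [haseqr2]; omega
    · rw [show j + 2 + 1 = j + 3 from rfl, haseqr]; omega
  have hNw : wnaf (2^(j+1) + aseq j + v) = W + 1 + 1 := by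
    have := wnaf_pad_shift (j+1) (aseq j + v) (by omega)
    rw [Nat.add_assoc, this, hW]
    omega
  rw [Mfun_eq, Mfun_eq, hNlen, hlen, hNw, hW]
  -- first top split
  rw [cnt_topsplit (j+1) _ (W+1)]
  have t1 : cnt (j+1) ((2^(j+1) + aseq j + v : ℕ) : ℤ) (W+1+1) = 0 :=
    cnt_big_nat _ _ _ (by omega)
  have t3 : cnt (j+1) (((2^(j+1) + aseq j + v : ℕ) : ℤ) + 2^(j+1)) (W+1) = 0 := by
    have e : (((2^(j+1) + aseq j + v : ℕ) : ℤ) + 2^(j+1)) = ((2^(j+1) + aseq j + v + 2^(j+1) : ℕ) : ℤ) := by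
      push_cast; ring
    rw [e]
    exact cnt_big_nat _ _ _ (by omega)
  have e2 : (((2^(j+1) + aseq j + v : ℕ) : ℤ) - 2^(j+1)) = ((aseq j + v : ℕ) : ℤ) := by
    push_cast; ring
  rw [t1, t3, e2]
  -- second top split
  rw [show W + 1 = W + 1 from rfl, cnt_topsplit j _ W]
  have t3' : cnt j (((aseq j + v : ℕ) : ℤ) + 2^j) W = 0 := by
    have e : (((aseq j + v : ℕ) : ℤ) + 2^j) = ((aseq j + v + 2^j : ℕ) : ℤ) := by push_cast; ring
    rw [e]
    exact cnt_big_nat _ _ _ (by omega)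
  have e2' : (((aseq j + v : ℕ) : ℤ) - 2^j) = -(((2^j - (aseq j + v) : ℕ)) : ℤ) := by
    rw [Nat.cast_sub hlt.le]
    push_cast; ring
  have hsym : wnaf (2^j - (aseq j + v)) = wnaf (aseq j + v) := wnaf_sym j _ hj h1 h2
  have t2' : cnt j (((aseq j + v : ℕ) : ℤ) - 2^j) W = 0 := by
    rw [e2', cnt_neg]
    by_contra hc
    have := cnt_min _ _ _ hc
    rw [Int.natAbs_natCast, hsym, hW] at this
    omega
  rw [t3', t2']
  omega

lemma partA (j v : ℕ) (hj : 1 ≤ j) (hv : v < aseq (j+1) - aseq j) :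
    Mfun (aseq (j+2) + v) = Mfun (2^j - (aseq j + v)) + Mfun (aseq j + v) := by
  have h1 : aseq j ≤ aseq j + v := Nat.le_add_right _ _
  have haseq1 : 1 ≤ aseq j := aseq_pos j hj
  have h2 : aseq j + v < aseq (j+1) := by omega
  have hn1 : 1 ≤ aseq j + v := by omega
  have hlen : nlen (aseq j + v) = j := nlen_in_interval _ j hn1 h1 h2
  have hW1 : 1 ≤ wnaf (aseq j + v) := wnaf_pos _ hn1
  obtain ⟨W, hW⟩ : ∃ W, wnaf (aseq j + v) = W + 1 := ⟨wnaf (aseq j + v) - 1, by omega⟩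
  have hlt : aseq j + v < 2^j := lt_two_pow_of_interval _ j h2
  have haseqr : aseq (j+3) = 2^(j+1) + aseq (j+1) := aseq_rec (j+1) (by omega)
  have haseqr2 : aseq (j+2) = 2^j + aseq j := aseq_rec j hj
  have hpow : (2:ℕ)^(j+1) = 2 * 2^j := by ring
  -- the complement m = 2^j - (aseq j + v)
  have hm1 : 1 ≤ 2^j - (aseq j + v) := by omega
  have hmw : wnaf (2^j - (aseq j + v)) = W + 1 := by
    rw [wnaf_sym j _ hj h1 h2, hW]
  have hmlen : nlen (2^j - (aseq j + v)) ≤ j + 1 := by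
    have hb := nlen_bounds _ hm1
    by_contra hc
    have := aseq_mono (j+2) (nlen (2^j - (aseq j + v))) (by omega)
    rw [haseqr2] at this
    omega
  have hpad : cnt (j+1) ((2^j - (aseq j + v) : ℕ) : ℤ) (W+1) = Mfun (2^j - (aseq j + v)) := by
    rw [Mfun_eq, ← hmw, cnt_pad _ (j+1) hmlen]
  -- the big number N = aseq (j+2) + v
  have hNe : aseq (j+2) + v = 2^j + (aseq j + v) := by rw [haseqr2]; ring
  have hNlen : nlen (aseq (j+2) + v) = j + 2 := by
    apply nlen_in_interval _ _ (by omega)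
    · omega
    · rw [show j + 2 + 1 = j + 3 from rfl, haseqr]; omega
  have hNw : wnaf (aseq (j+2) + v) = W + 1 + 1 := by
    rw [hNe, wnaf_shift j _ hj h1 h2, hW]
    omega
  rw [Mfun_eq (aseq (j+2) + v), hNlen, hNw, Mfun_eq (aseq j + v), hlen, hW]
  -- first top split
  rw [cnt_topsplit (j+1) _ (W+1)]
  have t3 : cnt (j+1) (((aseq (j+2) + v : ℕ) : ℤ) + 2^(j+1)) (W+1) = 0 := by
    have e : (((aseq (j+2) + v : ℕ) : ℤ) + 2^(j+1)) = ((aseq (j+2) + v + 2^(j+1) : ℕ) : ℤ) := by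
      push_cast; ring
    rw [e]
    exact cnt_big_nat _ _ _ (by omega)
  have e2 : (((aseq (j+2) + v : ℕ) : ℤ) - 2^(j+1)) = -(((2^j - (aseq j + v) : ℕ)) : ℤ) := by
    rw [Nat.cast_sub hlt.le]
    rw [show ((aseq (j+2) + v : ℕ) : ℤ) = ((2^j + (aseq j + v) : ℕ) : ℤ) by rw [hNe]]
    push_cast [hpow]
    ring
  rw [t3, e2, cnt_neg, hpad]
  -- second top split on the first term
  rw [cnt_topsplit j _ (W+1)]
  have t1' : cnt j ((aseq (j+2) + v : ℕ) : ℤ) (W+1+1) = 0 := by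
    apply cnt_big_nat
    rw [haseqr2]
    omega
  have t3' : cnt j (((aseq (j+2) + v : ℕ) : ℤ) + 2^j) (W+1) = 0 := by
    have e : (((aseq (j+2) + v : ℕ) : ℤ) + 2^j) = ((aseq (j+2) + v + 2^j : ℕ) : ℤ) := by
      push_cast; ring
    rw [e]
    apply cnt_big_nat
    rw [haseqr2]
    omega
  have e2' : (((aseq (j+2) + v : ℕ) : ℤ) - 2^j) = ((aseq j + v : ℕ) : ℤ) := by
    rw [show ((aseq (j+2) + v : ℕ) : ℤ) = ((2^j + (aseq j + v) : ℕ) : ℤ) by rw [hNe]]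
    push_cast
    ring
  rw [t1', t3', e2']
  omega

theorem num_opt_recursion_AC (k v : ℕ) (hk : 3 ≤ k)
    (hv : v < (NAFInterval (k - 2)).ncard) :
    Mfun (aseq k + v)
      = Mfun (2 ^ (k - 2) - (aseq (k - 2) + v)) + Mfun (aseq (k - 2) + v) ∧
    Mfun (2 ^ (k - 1) + aseq (k - 2) + v) = Mfun (aseq (k - 2) + v) := by
  obtain ⟨j, rfl⟩ : ∃ j, k = j + 2 := ⟨k - 2, by omega⟩
  have hj : 1 ≤ j := by omega
  rw [show j + 2 - 2 = j by omega] at hv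
  rw [NAFInterval_ncard j hj] at hv
  rw [show j + 2 - 2 = j by omega, show j + 2 - 1 = j + 1 by omega]
  exact ⟨partA j v hj hv, partC j v hj hv⟩
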